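/- Let n, s, a1 be integers with 2 ≤ s < a1 ≤ n. Then the sum over all subsets A of {1,…,n} of cardinality a1 of the quantity (a1 − s)/(n − T(A)) equals (a1/n)·C(n, a1); equivalently, the average of w0(A) = (a1 − s)/(n − T(A)) over all such subsets A equals a1/n. (This is the first half of Theorem 1: E(w0) = a1/n, where w0 is the proportion of accepters among students with random number strictly greater than T.) -/

import Mathlib

/-- `kthSmallest A k` is the `k`-th smallest element of the finite set `A`
(so `kthSmallest A 1` is the minimum), obtained as entry `k - 1` of the
increasing enumeration of `A`. In the waiting-list model, for `s ≤ a1 = |A|`,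
`T(A) = kthSmallest A s` is the random number of the last student receiving
an offer, where `A` is the set of positions of accepters. -/
def kthSmallest (A : Finset ℕ) (k : ℕ) : ℕ :=
  (A.sort (· ≤ ·)).getD (k - 1) 0


lemma list_filter_lt_get (l : List ℕ) (hl : l.Pairwise (· < ·)) :
    ∀ i (h : i < l.length), (l.filter (fun y => y < l[i])).length = i := by
  induction l with
  | nil => intro i h; simp at h
  | cons a l ih =>
    rw [List.pairwise_cons] at hl
    intro i h
    cases i with
    | zero =>
      have hnil : List.filter (fun y => decide (y < a)) l = [] :=
        List.filter_eq_nil_iff.mpr (by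
          intro y hy
          simpa using not_lt.mpr (le_of_lt (hl.1 y hy)))
      simp [List.filter_cons, hnil]
    | succ i =>
      have h' : i < l.length := by simpa using h
      have ha : a < l[i] := hl.1 _ (l.getElem_mem h')
      simp only [List.getElem_cons_succ, List.filter_cons, decide_eq_true_eq, ha, if_true]
      rw [List.length_cons, ih hl.2 i h']


lemma card_filter_sort (A : Finset ℕ) (p : ℕ → Prop) [DecidablePred p] :
    (A.filter p).card = ((A.sort (· ≤ ·)).filter (fun y => p y)).length := by
  rw [Finset.card, Finset.filter_val,
    show A.val = ↑(A.sort (· ≤ ·)) from (Finset.sort_eq _ _).symm]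
  rw [Multiset.filter_coe, Multiset.coe_card]

lemma kthSmallest_mem (A : Finset ℕ) (s : ℕ) (h1 : 1 ≤ s) (hs : s ≤ A.card) :
    kthSmallest A s ∈ A := by
  have hlen : s - 1 < (A.sort (· ≤ ·)).length := by
    rw [Finset.length_sort]; omega
  rw [kthSmallest, List.getD_eq_getElem _ _ hlen]
  exact (Finset.mem_sort _).mp (List.getElem_mem hlen)

lemma card_filter_lt_kthSmallest (A : Finset ℕ) (s : ℕ) (h1 : 1 ≤ s) (hs : s ≤ A.card) :
    (A.filter (· < kthSmallest A s)).card = s - 1 := by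
  have hlen : s - 1 < (A.sort (· ≤ ·)).length := by
    rw [Finset.length_sort]; omega
  rw [kthSmallest, List.getD_eq_getElem _ _ hlen, card_filter_sort]
  exact list_filter_lt_get _ (Finset.sortedLT_sort A).pairwise _ hlen

lemma card_filter_lt_mono (A : Finset ℕ) {a b : ℕ} (ha : a ∈ A) (hab : a < b) :
    (A.filter (· < a)).card < (A.filter (· < b)).card := by
  apply Finset.card_lt_card
  constructor
  · intro x hx
    simp only [Finset.mem_filter] at hx ⊢
    exact ⟨hx.1, lt_trans hx.2 hab⟩
  · intro hsub
    have : a ∈ A.filter (· < b) := Finset.mem_filter.mpr ⟨ha, hab⟩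
    have := hsub this
    simp at this

lemma kthSmallest_eq_iff (A : Finset ℕ) (s t : ℕ) (h1 : 1 ≤ s) (hs : s ≤ A.card) :
    kthSmallest A s = t ↔ t ∈ A ∧ (A.filter (· < t)).card = s - 1 := by
  constructor
  · rintro rfl
    exact ⟨kthSmallest_mem A s h1 hs, card_filter_lt_kthSmallest A s h1 hs⟩
  · rintro ⟨ht, hc⟩
    have h0 := kthSmallest_mem A s h1 hs
    have hc0 := card_filter_lt_kthSmallest A s h1 hs
    rcases lt_trichotomy (kthSmallest A s) t with h | h | h
    · have := card_filter_lt_mono A h0 h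
      omega
    · exact h
    · have := card_filter_lt_mono A ht h
      omega

lemma fiber_card (n s a1 t : ℕ) (h1 : 1 ≤ s) (hsa : s ≤ a1) (ht1 : 1 ≤ t) (htn : t ≤ n) :
    (((Finset.Icc 1 n).powersetCard a1).filter (fun A => kthSmallest A s = t)).card
    = (t - 1).choose (s - 1) * (n - t).choose (a1 - s) := by
  have hrhs : ((Finset.Icc 1 (t-1)).powersetCard (s-1) ×ˢ
      (Finset.Icc (t+1) n).powersetCard (a1-s)).card
      = (t - 1).choose (s - 1) * (n - t).choose (a1 - s) := by
    rw [Finset.card_product, Finset.card_powersetCard, Finset.card_powersetCard,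
      Nat.card_Icc, Nat.card_Icc]
    congr 2 <;> omega
  rw [← hrhs]
  refine Finset.card_bij' (fun A _ => (A.filter (· < t), A.filter (t < ·)))
    (fun p _ => insert t (p.1 ∪ p.2)) ?_ ?_ ?_ ?_
  · -- forward membership
    intro A hA
    simp only [Finset.mem_filter, Finset.mem_powersetCard] at hA
    obtain ⟨⟨hsub, hcard⟩, hT⟩ := hA
    have hmem : t ∈ A ∧ (A.filter (· < t)).card = s - 1 :=
      (kthSmallest_eq_iff A s t h1 (by omega)).mp hT
    simp only [Finset.mem_product, Finset.mem_powersetCard]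
    refine ⟨⟨?_, hmem.2⟩, ?_, ?_⟩
    · intro x hx
      simp only [Finset.mem_filter] at hx
      have := hsub hx.1
      simp only [Finset.mem_Icc] at this ⊢
      omega
    · intro x hx
      simp only [Finset.mem_filter] at hx
      have := hsub hx.1
      simp only [Finset.mem_Icc] at this ⊢
      omega
    · -- card of upper filter
      have hins : A.filter (t ≤ ·) = insert t (A.filter (t < ·)) := by
        ext x
        simp only [Finset.mem_filter, Finset.mem_insert]
        constructor
        · rintro ⟨hx, hle⟩
          rcases eq_or_lt_of_le hle with h | h
          · exact Or.inl h.symm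
          · exact Or.inr ⟨hx, h⟩
        · rintro (rfl | ⟨hx, hlt⟩)
          · exact ⟨hmem.1, le_refl _⟩
          · exact ⟨hx, le_of_lt hlt⟩
      have hnotmem : t ∉ A.filter (t < ·) := by simp
      have hneg : A.filter (fun a => ¬ a < t) = A.filter (t ≤ ·) := by
        apply Finset.filter_congr
        intro x _
        simp
      have hsplit := Finset.card_filter_add_card_filter_not (s := A) (p := (· < t))
      rw [hneg, hins, Finset.card_insert_of_notMem hnotmem, hcard] at hsplit
      omega
  · -- backward membership
    intro p hp
    simp only [Finset.mem_product, Finset.mem_powersetCard] at hp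
    obtain ⟨⟨hB, hBc⟩, hC, hCc⟩ := hp
    have hBlt : ∀ x ∈ p.1, x < t := by
      intro x hx; have := hB hx; simp only [Finset.mem_Icc] at this; omega
    have hCgt : ∀ x ∈ p.2, t < x := by
      intro x hx; have := hC hx; simp only [Finset.mem_Icc] at this; omega
    have hdisj : Disjoint p.1 p.2 := by
      rw [Finset.disjoint_left]
      intro x hx1 hx2
      exact absurd (hBlt x hx1) (not_lt.mpr (le_of_lt (hCgt x hx2)))
    have htnot : t ∉ p.1 ∪ p.2 := by
      simp only [Finset.mem_union]
      rintro (h | h)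
      · exact absurd (hBlt t h) (lt_irrefl t)
      · exact absurd (hCgt t h) (lt_irrefl t)
    have hcard : (insert t (p.1 ∪ p.2)).card = a1 := by
      rw [Finset.card_insert_of_notMem htnot, Finset.card_union_of_disjoint hdisj]
      omega
    simp only [Finset.mem_filter, Finset.mem_powersetCard]
    refine ⟨⟨?_, hcard⟩, ?_⟩
    · intro x hx
      simp only [Finset.mem_insert, Finset.mem_union] at hx
      simp only [Finset.mem_Icc]
      rcases hx with rfl | h | h
      · omega
      · have := hB h; simp only [Finset.mem_Icc] at this; omega
      · have := hC h; simp only [Finset.mem_Icc] at this; omega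
    · rw [kthSmallest_eq_iff _ s t h1 (by omega)]
      refine ⟨Finset.mem_insert_self t _, ?_⟩
      have : (insert t (p.1 ∪ p.2)).filter (· < t) = p.1 := by
        ext x
        simp only [Finset.mem_filter, Finset.mem_insert, Finset.mem_union]
        constructor
        · rintro ⟨rfl | h | h, hlt⟩
          · omega
          · exact h
          · exact absurd (hCgt x h) (not_lt.mpr (le_of_lt hlt))
        · intro hx
          exact ⟨Or.inr (Or.inl hx), hBlt x hx⟩
      rw [this, hBc]
  · -- left inverse
    intro A hA
    simp only [Finset.mem_filter, Finset.mem_powersetCard] at hA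
    obtain ⟨⟨hsub, hcard⟩, hT⟩ := hA
    have hmem : t ∈ A := ((kthSmallest_eq_iff A s t h1 (by omega)).mp hT).1
    ext x
    simp only [Finset.mem_insert, Finset.mem_union, Finset.mem_filter]
    constructor
    · rintro (rfl | ⟨h, _⟩ | ⟨h, _⟩) <;> first | exact hmem | exact h
    · intro hx
      rcases lt_trichotomy x t with h | h | h
      · exact Or.inr (Or.inl ⟨hx, h⟩)
      · exact Or.inl h
      · exact Or.inr (Or.inr ⟨hx, h⟩)
  · -- right inverse
    intro p hp
    simp only [Finset.mem_product, Finset.mem_powersetCard] at hp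
    obtain ⟨⟨hB, _⟩, hC, _⟩ := hp
    have hBlt : ∀ x ∈ p.1, x < t := by
      intro x hx; have := hB hx; simp only [Finset.mem_Icc] at this; omega
    have hCgt : ∀ x ∈ p.2, t < x := by
      intro x hx; have := hC hx; simp only [Finset.mem_Icc] at this; omega
    have e1 : (insert t (p.1 ∪ p.2)).filter (· < t) = p.1 := by
      ext x
      simp only [Finset.mem_filter, Finset.mem_insert, Finset.mem_union]
      constructor
      · rintro ⟨rfl | h | h, hlt⟩
        · omega
        · exact h
        · exact absurd (hCgt x h) (not_lt.mpr (le_of_lt hlt))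
      · intro hx
        exact ⟨Or.inr (Or.inl hx), hBlt x hx⟩
    have e2 : (insert t (p.1 ∪ p.2)).filter (t < ·) = p.2 := by
      ext x
      simp only [Finset.mem_filter, Finset.mem_insert, Finset.mem_union]
      constructor
      · rintro ⟨rfl | h | h, hlt⟩
        · omega
        · exact absurd (hBlt x h) (not_lt.mpr (le_of_lt hlt))
        · exact h
      · intro hx
        exact ⟨Or.inr (Or.inr hx), hCgt x hx⟩
    show ((insert t (p.1 ∪ p.2)).filter (· < t), (insert t (p.1 ∪ p.2)).filter (t < ·)) = p
    rw [e1, e2]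

lemma kth_maps_to (n s a1 : ℕ) (h1 : 1 ≤ s) (hsa : s ≤ a1) :
    ∀ A ∈ (Finset.Icc 1 n).powersetCard a1, kthSmallest A s ∈ Finset.Icc 1 n := by
  intro A hA
  rw [Finset.mem_powersetCard] at hA
  exact hA.1 (kthSmallest_mem A s h1 (by omega))

lemma sum_fiber (n s a1 : ℕ) (h1 : 1 ≤ s) (hsa : s ≤ a1) (ha1 : a1 ≤ n) :
    ∑ t ∈ Finset.Icc 1 n, (t - 1).choose (s - 1) * (n - t).choose (a1 - s)
    = n.choose a1 := by
  have hcard := Finset.card_eq_sum_card_fiberwise (kth_maps_to n s a1 h1 hsa)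
  rw [Finset.card_powersetCard, Nat.card_Icc, Nat.add_sub_cancel] at hcard
  rw [hcard]
  apply Finset.sum_congr rfl
  intro t ht
  rw [Finset.mem_Icc] at ht
  exact (fiber_card n s a1 t h1 hsa ht.1 ht.2).symm


/-- **Theorem 1, first half: E(w₀) = a1/n.**
For integers `2 ≤ s < a1 ≤ n`, the sum over all subsets `A` of `{1,…,n}` of
cardinality `a1` of `w₀(A) = (a1 − s)/(n − T(A))` (the proportion of accepters
among students with random number strictly greater than `T(A)`) equals
`(a1/n)·C(n, a1)`; i.e. the average of `w₀` over all such subsets is `a1/n`. -/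
theorem expectation_w0 (n s a1 : ℕ) (hs : 2 ≤ s) (hsa : s < a1) (han : a1 ≤ n) :
    ∑ A ∈ (Finset.Icc 1 n).powersetCard a1,
      ((a1 : ℚ) - (s : ℚ)) / ((n : ℚ) - (kthSmallest A s : ℚ))
      = ((a1 : ℚ) / (n : ℚ)) * (n.choose a1 : ℚ) := by
  have hn1 : 1 ≤ n := by omega
  rw [← Finset.sum_fiberwise_of_maps_to (kth_maps_to n s a1 (by omega) (by omega))
    (fun A => ((a1 : ℚ) - (s : ℚ)) / ((n : ℚ) - (kthSmallest A s : ℚ)))]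
  have hstep : ∀ t ∈ Finset.Icc 1 n,
      (∑ A ∈ ((Finset.Icc 1 n).powersetCard a1).filter (fun A => kthSmallest A s = t),
        ((a1 : ℚ) - (s : ℚ)) / ((n : ℚ) - (kthSmallest A s : ℚ)))
      = ((t - 1).choose (s - 1) * (n - t).choose (a1 - s) : ℕ) *
          (((a1 : ℚ) - (s : ℚ)) / ((n : ℚ) - (t : ℚ))) := by
    intro t ht
    have e : ∀ A ∈ ((Finset.Icc 1 n).powersetCard a1).filter
        (fun A => kthSmallest A s = t),
        ((a1 : ℚ) - (s : ℚ)) / ((n : ℚ) - (kthSmallest A s : ℚ))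
        = ((a1 : ℚ) - (s : ℚ)) / ((n : ℚ) - (t : ℚ)) := by
      intro A hA
      rw [(Finset.mem_filter.mp hA).2]
    rw [Finset.sum_congr rfl e, Finset.sum_const, nsmul_eq_mul,
      fiber_card n s a1 t (by omega) (by omega)
      (Finset.mem_Icc.mp ht).1 (Finset.mem_Icc.mp ht).2]
  rw [Finset.sum_congr rfl hstep]
  have hsplit : Finset.Icc 1 n = insert n (Finset.Icc 1 (n - 1)) := by
    ext x
    simp only [Finset.mem_Icc, Finset.mem_insert]
    omega
  have hnotmem : n ∉ Finset.Icc 1 (n - 1) := by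
    simp only [Finset.mem_Icc]; omega
  rw [hsplit, Finset.sum_insert hnotmem]
  have hzero : (((n - 1).choose (s - 1) * (n - n).choose (a1 - s) : ℕ) : ℚ) *
      (((a1 : ℚ) - (s : ℚ)) / ((n : ℚ) - (n : ℚ))) = 0 := by
    rw [Nat.sub_self,
      Nat.choose_eq_zero_of_lt (show 0 < a1 - s by omega)]
    simp
  rw [hzero, zero_add]
  have hpt : ∀ t ∈ Finset.Icc 1 (n - 1),
      (((t - 1).choose (s - 1) * (n - t).choose (a1 - s) : ℕ) : ℚ) *
        (((a1 : ℚ) - (s : ℚ)) / ((n : ℚ) - (t : ℚ)))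
      = (((t - 1).choose (s - 1) * ((n - 1) - t).choose ((a1 - 1) - s) : ℕ) : ℚ) := by
    intro t ht
    rw [Finset.mem_Icc] at ht
    have htn : t < n := by omega
    have hkey : (n - t) * ((n - 1) - t).choose ((a1 - 1) - s)
        = (n - t).choose (a1 - s) * (a1 - s) := by
      have h := Nat.add_one_mul_choose_eq ((n - 1) - t) ((a1 - 1) - s)
      have e1 : ((n - 1) - t) + 1 = n - t := by omega
      have e2 : ((a1 - 1) - s) + 1 = a1 - s := by omega
      rw [e1, e2] at h
      exact h
    have hnat : (t - 1).choose (s - 1) * (n - t).choose (a1 - s) * (a1 - s)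
        = (t - 1).choose (s - 1) * ((n - 1) - t).choose ((a1 - 1) - s) * (n - t) := by
      rw [mul_assoc, ← hkey]; ring
    have ecast1 : ((a1 : ℚ) - (s : ℚ)) = ((a1 - s : ℕ) : ℚ) := by
      rw [Nat.cast_sub (by omega)]
    have ecast2 : ((n : ℚ) - (t : ℚ)) = ((n - t : ℕ) : ℚ) := by
      rw [Nat.cast_sub (by omega)]
    have hd : ((n - t : ℕ) : ℚ) ≠ 0 := by
      exact_mod_cast (show n - t ≠ 0 by omega)
    rw [ecast1, ecast2, ← mul_div_assoc, div_eq_iff hd]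
    exact_mod_cast hnat
  rw [Finset.sum_congr rfl hpt, ← Nat.cast_sum]
  rw [sum_fiber (n - 1) s (a1 - 1) (by omega) (by omega) (by omega)]
  have hfin : n * (n - 1).choose (a1 - 1) = n.choose a1 * a1 := by
    have h := Nat.add_one_mul_choose_eq (n - 1) (a1 - 1)
    have e1 : (n - 1) + 1 = n := by omega
    have e2 : (a1 - 1) + 1 = a1 := by omega
    rw [e1, e2] at h
    exact h
  have hn0 : (n : ℚ) ≠ 0 := by
    exact_mod_cast (show n ≠ 0 by omega)
  rw [div_mul_eq_mul_div, eq_div_iff hn0]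
  have : (n - 1).choose (a1 - 1) * n = a1 * n.choose a1 := by
    rw [Nat.mul_comm, hfin, Nat.mul_comm]
  exact_mod_cast this
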